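/- Bijection between quantum transport plans and quantum couplings (Proposition 2.3, finite-dimensional, full-rank case): let ρ be a positive definite density matrix of size n and σ a density matrix of size n. Let M be the set of linear maps Φ : Matrix (Fin n) (Fin n) ℂ → Matrix (Fin n) (Fin n) ℂ such that there exist finitely many matrices B₁, …, B_m with Φ X = ∑ t, B_t * X * (B_t)ᴴ for all X, ∑ t, (B_t)ᴴ * B_t = 1, and Φ ρ = σ. Then the map sending Φ ∈ M to the matrix Π_Φ with entries (Π_Φ) (i, j) (k, l) = (Φ (√ρ * (Matrix.single j l 1) * √ρ)) i k is a bijection from M onto the set of couplings between ρ and σ. -/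

import Mathlib

open Matrix
open scoped ComplexOrder

noncomputable section

/-- A density matrix: positive semidefinite with trace 1. -/
def IsDensity {ι : Type*} [Fintype ι] (ρ : Matrix ι ι ℂ) : Prop :=
  ρ.PosSemidef ∧ ρ.trace = 1

/-- A coupling between the quantum states `ρ` and `σ`. -/
def IsCoupling {ι : Type*} [Fintype ι] (ρ σ : Matrix ι ι ℂ)
    (P : Matrix (ι × ι) (ι × ι) ℂ) : Prop :=
  P.PosSemidef ∧ P.trace = 1 ∧
  (∀ j l, ∑ i, P (i, j) (i, l) = ρ l j) ∧
  (∀ i k, ∑ j, P (i, j) (k, j) = σ i k)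

/-- The cost operator `C = ∑ s, (Rₛ ⊗ I − I ⊗ Rₛᵀ)²` associated to a family of
Hermitian matrices. -/
def costOp {ι : Type*} [Fintype ι] [DecidableEq ι] {κ : Type*} [Fintype κ]
    (R : κ → Matrix ι ι ℂ) : Matrix (ι × ι) (ι × ι) ℂ :=
  ∑ s, (Matrix.of (fun p q : ι × ι =>
      R s p.1 q.1 * (if p.2 = q.2 then 1 else 0)
      - (if p.1 = q.1 then 1 else 0) * R s q.2 p.2)) ^ 2

/-- The old Mathlib `Matrix.PosSemidef.sqrt` (removed upstream), restored verbatim. -/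
def Matrix.PosSemidef.sqrt {n : Type*} [Fintype n] [DecidableEq n] {A : Matrix n n ℂ}
    (hA : A.PosSemidef) : Matrix n n ℂ :=
  hA.1.eigenvectorUnitary.1 * diagonal ((↑) ∘ Real.sqrt ∘ hA.1.eigenvalues) *
    (star hA.1.eigenvectorUnitary : Matrix n n ℂ)

lemma aux_sqrt_conjTranspose {n : Type*} [Fintype n] [DecidableEq n] {A : Matrix n n ℂ}
    (hA : A.PosSemidef) : (hA.sqrt)ᴴ = hA.sqrt := by
  unfold Matrix.PosSemidef.sqrt
  rw [Matrix.conjTranspose_mul, Matrix.conjTranspose_mul, Matrix.diagonal_conjTranspose]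
  have hd : star ((↑) ∘ Real.sqrt ∘ hA.1.eigenvalues : n → ℂ) =
      ((↑) ∘ Real.sqrt ∘ hA.1.eigenvalues : n → ℂ) := by
    funext i
    simp
  rw [hd]
  simp only [Matrix.star_eq_conjTranspose, Matrix.conjTranspose_conjTranspose, Matrix.mul_assoc]

lemma aux_sqrt_mul_self {n : Type*} [Fintype n] [DecidableEq n] {A : Matrix n n ℂ}
    (hA : A.PosSemidef) : hA.sqrt * hA.sqrt = A := by
  unfold Matrix.PosSemidef.sqrt
  have hU : (star hA.1.eigenvectorUnitary : Matrix n n ℂ) * hA.1.eigenvectorUnitary.1 = 1 :=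
    Unitary.star_mul_self_of_mem hA.1.eigenvectorUnitary.2
  have hD : diagonal ((↑) ∘ Real.sqrt ∘ hA.1.eigenvalues) *
      diagonal ((↑) ∘ Real.sqrt ∘ hA.1.eigenvalues) =
      diagonal (RCLike.ofReal ∘ hA.1.eigenvalues : n → ℂ) := by
    rw [Matrix.diagonal_mul_diagonal]
    congr 1
    ext i
    simp only [Function.comp_apply]
    rw [← Complex.ofReal_mul, Real.mul_self_sqrt (hA.eigenvalues_nonneg i)]
    rfl
  conv_rhs => rw [hA.1.spectral_theorem]
  rw [Unitary.conjStarAlgAut_apply, ← hD]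
  simp only [Matrix.mul_assoc]
  rw [← Matrix.mul_assoc (star hA.1.eigenvectorUnitary : Matrix n n ℂ), hU, Matrix.one_mul]

lemma aux_mulE {n : ℕ} (M N : Matrix (Fin n) (Fin n) ℂ) (j l i k : Fin n) :
    (M * Matrix.single j l (1:ℂ) * N) i k = M i j * N l k := by
  rw [Matrix.mul_assoc, Matrix.mul_apply]
  simp only [Matrix.mul_apply, Matrix.single, Matrix.of_apply, ite_mul, mul_ite,
    zero_mul, mul_zero, one_mul, Finset.mul_sum, Finset.sum_mul]
  simp [Finset.sum_ite_eq, Finset.sum_ite_eq', ite_and]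

lemma aux_conj {n : ℕ} (Q B : Matrix (Fin n) (Fin n) ℂ) (hQH : Qᴴ = Q) (j l i k : Fin n) :
    (B * (Q * Matrix.single j l (1:ℂ) * Q) * Bᴴ) i k
      = (B * Q) i j * star ((B * Q) k l) := by
  have h : B * (Q * Matrix.single j l (1:ℂ) * Q) * Bᴴ
      = (B * Q) * Matrix.single j l (1:ℂ) * (B * Q)ᴴ := by
    rw [Matrix.conjTranspose_mul, hQH]
    simp only [Matrix.mul_assoc]
  rw [h, aux_mulE, Matrix.conjTranspose_apply]

/-- **Bijection between quantum transport plans and quantum couplings**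
(Proposition 2.3, finite-dimensional, full-rank case). -/
theorem transport_plans_couplings_bijection {n : ℕ}
    (ρ σ : Matrix (Fin n) (Fin n) ℂ)
    (hρ : IsDensity ρ) (hρ_pd : IsUnit ρ) (hσ : IsDensity σ) :
    Set.BijOn
      (fun Φ : Matrix (Fin n) (Fin n) ℂ →ₗ[ℂ] Matrix (Fin n) (Fin n) ℂ =>
        Matrix.of fun p q : Fin n × Fin n =>
          Φ (hρ.1.sqrt * Matrix.single p.2 q.2 (1 : ℂ) * hρ.1.sqrt) p.1 q.1)
      {Φ : Matrix (Fin n) (Fin n) ℂ →ₗ[ℂ] Matrix (Fin n) (Fin n) ℂ |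
        (∃ m : ℕ, ∃ B : Fin m → Matrix (Fin n) (Fin n) ℂ,
          (∀ X, Φ X = ∑ t, B t * X * (B t)ᴴ) ∧ ∑ t, (B t)ᴴ * B t = 1) ∧ Φ ρ = σ}
      {P : Matrix (Fin n × Fin n) (Fin n × Fin n) ℂ | IsCoupling ρ σ P} := by
  set Q := hρ.1.sqrt with hQdef
  have hQH : Qᴴ = Q := aux_sqrt_conjTranspose hρ.1
  have hQQ : Q * Q = ρ := aux_sqrt_mul_self hρ.1
  have hQdet : IsUnit Q.det := by
    have h1 : IsUnit ρ.det := (Matrix.isUnit_iff_isUnit_det ρ).mp hρ_pd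
    rw [← hQQ, Matrix.det_mul] at h1
    exact isUnit_of_mul_isUnit_left h1
  have hQinv : Q * Q⁻¹ = 1 := Matrix.mul_nonsing_inv Q hQdet
  have hQinv' : Q⁻¹ * Q = 1 := Matrix.nonsing_inv_mul Q hQdet
  have hQinvH : Q⁻¹ᴴ = Q⁻¹ := by rw [Matrix.conjTranspose_nonsing_inv, hQH]
  have hcancel : ∀ M : Matrix (Fin n) (Fin n) ℂ, Q⁻¹ * (Q * M) = M := fun M => by
    rw [← Matrix.mul_assoc, hQinv', Matrix.one_mul]
  have hcancel' : ∀ M : Matrix (Fin n) (Fin n) ℂ, Q * (Q⁻¹ * M) = M := fun M => by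
    rw [← Matrix.mul_assoc, hQinv, Matrix.one_mul]
  refine ⟨?_, ?_, ?_⟩
  · -- MapsTo
    rintro Φ ⟨⟨m, B, hB, hB1⟩, hΦρ⟩
    have key : ∀ p q : Fin n × Fin n,
        Φ (Q * Matrix.single p.2 q.2 (1:ℂ) * Q) p.1 q.1
          = ∑ t, (B t * Q) p.1 p.2 * star ((B t * Q) q.1 q.2) := by
      intro p q
      rw [hB, Matrix.sum_apply]
      exact Finset.sum_congr rfl fun t _ => aux_conj Q (B t) hQH p.2 q.2 p.1 q.1
    have hsum1 : (∑ t, (B t * Q)ᴴ * (B t * Q)) = ρ := by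
      have h : ∀ t, (B t * Q)ᴴ * (B t * Q) = Q * ((B t)ᴴ * B t) * Q := fun t => by
        rw [Matrix.conjTranspose_mul, hQH]; simp only [Matrix.mul_assoc]
      simp_rw [h]
      rw [← Finset.sum_mul, ← Finset.mul_sum, hB1, Matrix.mul_one, hQQ]
    have hsum2 : (∑ t, (B t * Q) * (B t * Q)ᴴ) = σ := by
      have h : ∀ t, (B t * Q) * (B t * Q)ᴴ = B t * ρ * (B t)ᴴ := fun t => by
        rw [Matrix.conjTranspose_mul, hQH, ← hQQ]; simp only [Matrix.mul_assoc]
      simp_rw [h]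
      rw [← hB ρ, hΦρ]
    show IsCoupling ρ σ (Matrix.of fun p q : Fin n × Fin n =>
      Φ (Q * Matrix.single p.2 q.2 (1:ℂ) * Q) p.1 q.1)
    have hm1 : ∀ j l, ∑ i, (Matrix.of fun p q : Fin n × Fin n =>
        Φ (Q * Matrix.single p.2 q.2 (1:ℂ) * Q) p.1 q.1) (i, j) (i, l) = ρ l j := by
      intro j l
      calc ∑ i, (Matrix.of fun p q : Fin n × Fin n =>
              Φ (Q * Matrix.single p.2 q.2 (1:ℂ) * Q) p.1 q.1) (i, j) (i, l)
          = ∑ i, ∑ t, (B t * Q) i j * star ((B t * Q) i l) := by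
            exact Finset.sum_congr rfl fun i _ => key (i, j) (i, l)
        _ = ∑ t, ∑ i, star ((B t * Q) i l) * (B t * Q) i j := by
            rw [Finset.sum_comm]
            exact Finset.sum_congr rfl fun t _ => Finset.sum_congr rfl fun i _ => mul_comm _ _
        _ = ∑ t, ((B t * Q)ᴴ * (B t * Q)) l j := by
            refine Finset.sum_congr rfl fun t _ => ?_
            rw [Matrix.mul_apply]
            simp [Matrix.conjTranspose_apply]
        _ = ρ l j := by rw [← Matrix.sum_apply, hsum1]
    have hm2 : ∀ i k, ∑ j, (Matrix.of fun p q : Fin n × Fin n =>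
        Φ (Q * Matrix.single p.2 q.2 (1:ℂ) * Q) p.1 q.1) (i, j) (k, j) = σ i k := by
      intro i k
      calc ∑ j, (Matrix.of fun p q : Fin n × Fin n =>
              Φ (Q * Matrix.single p.2 q.2 (1:ℂ) * Q) p.1 q.1) (i, j) (k, j)
          = ∑ j, ∑ t, (B t * Q) i j * star ((B t * Q) k j) := by
            exact Finset.sum_congr rfl fun j _ => key (i, j) (k, j)
        _ = ∑ t, ((B t * Q) * (B t * Q)ᴴ) i k := by
            rw [Finset.sum_comm]
            refine Finset.sum_congr rfl fun t _ => ?_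
            rw [Matrix.mul_apply]
            simp [Matrix.conjTranspose_apply]
        _ = σ i k := by rw [← Matrix.sum_apply, hsum2]
    refine ⟨?_, ?_, hm1, hm2⟩
    · -- PSD
      set W : Matrix (Fin m) (Fin n × Fin n) ℂ :=
        Matrix.of fun t p => star ((B t * Q) p.1 p.2) with hW
      have hWW : (Matrix.of fun p q : Fin n × Fin n =>
          Φ (Q * Matrix.single p.2 q.2 (1:ℂ) * Q) p.1 q.1) = Wᴴ * W := by
        ext p q
        rw [Matrix.of_apply, key p q, Matrix.mul_apply]
        simp [hW, Matrix.conjTranspose_apply]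
      rw [hWW]
      exact Matrix.posSemidef_conjTranspose_mul_self W
    · -- trace
      rw [Matrix.trace]
      simp only [Matrix.diag_apply]
      rw [Fintype.sum_prod_type, Finset.sum_comm]
      calc ∑ j, ∑ i, (Matrix.of fun p q : Fin n × Fin n =>
              Φ (Q * Matrix.single p.2 q.2 (1:ℂ) * Q) p.1 q.1) (i, j) (i, j)
          = ∑ j, ρ j j := Finset.sum_congr rfl fun j _ => hm1 j j
        _ = ρ.trace := rfl
        _ = 1 := hρ.2
  · -- InjOn
    rintro Φ₁ _ Φ₂ _ heq
    have hE : ∀ j l : Fin n, Φ₁ (Q * Matrix.single j l (1:ℂ) * Q)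
        = Φ₂ (Q * Matrix.single j l (1:ℂ) * Q) := by
      intro j l
      ext i k
      exact Matrix.ext_iff.mpr heq (i, j) (k, l)
    have expand : ∀ Y : Matrix (Fin n) (Fin n) ℂ,
        Q * Y * Q = ∑ j, ∑ l, Y j l • (Q * Matrix.single j l (1:ℂ) * Q) := by
      intro Y
      conv_lhs => rw [matrix_eq_sum_single Y]
      simp_rw [Matrix.mul_sum, Finset.sum_mul]
      refine Finset.sum_congr rfl fun j _ => Finset.sum_congr rfl fun l _ => ?_
      have h : Matrix.single j l (Y j l) = Y j l • Matrix.single j l (1:ℂ) := by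
        rw [smul_single, smul_eq_mul, mul_one]
      rw [h, Matrix.mul_smul, Matrix.smul_mul]
    refine LinearMap.ext fun X => ?_
    have hX : Q * (Q⁻¹ * X * Q⁻¹) * Q = X := by
      simp only [Matrix.mul_assoc]
      rw [hQinv', Matrix.mul_one, hcancel']
    conv_lhs => rw [← hX]
    conv_rhs => rw [← hX]
    rw [expand, map_sum, map_sum]
    refine Finset.sum_congr rfl fun j _ => ?_
    rw [map_sum, map_sum]
    refine Finset.sum_congr rfl fun l _ => ?_
    rw [Φ₁.map_smul, Φ₂.map_smul, hE j l]
  · -- SurjOn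
    rintro P hP
    obtain ⟨hPsd, hPtr, hPm1, hPm2⟩ := hP
    set S := hPsd.sqrt with hSdef
    have hSH : Sᴴ = S := aux_sqrt_conjTranspose hPsd
    have hSS : S * S = P := aux_sqrt_mul_self hPsd
    set C : Fin n × Fin n → Matrix (Fin n) (Fin n) ℂ :=
      fun r => Matrix.of fun i j => S (i, j) r with hCdef
    have hkey : ∀ p q : Fin n × Fin n, ∑ r, C r p.1 p.2 * star (C r q.1 q.2) = P p q := by
      intro p q
      have h1 : ∀ r, C r p.1 p.2 * star (C r q.1 q.2) = S p r * S r q := by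
        intro r
        have h2 : star (S q r) = S r q := by
          rw [← Matrix.conjTranspose_apply, hSH]
        simp only [hCdef, Matrix.of_apply, Prod.mk.eta, h2]
      simp_rw [h1]
      rw [← Matrix.mul_apply, hSS]
    have hCC : ∑ r : Fin n × Fin n, (C r)ᴴ * C r = ρ := by
      ext l j
      rw [Matrix.sum_apply]
      calc ∑ r : Fin n × Fin n, ((C r)ᴴ * C r) l j
          = ∑ r : Fin n × Fin n, ∑ i, C r i j * star (C r i l) := by
            refine Finset.sum_congr rfl fun r _ => ?_
            rw [Matrix.mul_apply]
            exact Finset.sum_congr rfl fun i _ => by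
              rw [Matrix.conjTranspose_apply]; ring
        _ = ∑ i, ∑ r : Fin n × Fin n, C r i j * star (C r i l) := Finset.sum_comm
        _ = ∑ i, P (i, j) (i, l) := Finset.sum_congr rfl fun i _ => hkey (i, j) (i, l)
        _ = ρ l j := hPm1 j l
    have hCCt : ∑ r : Fin n × Fin n, C r * (C r)ᴴ = σ := by
      ext i k
      rw [Matrix.sum_apply]
      calc ∑ r : Fin n × Fin n, (C r * (C r)ᴴ) i k
          = ∑ r : Fin n × Fin n, ∑ j, C r i j * star (C r k j) := by
            refine Finset.sum_congr rfl fun r _ => ?_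
            rw [Matrix.mul_apply]
            exact Finset.sum_congr rfl fun j _ => by rw [Matrix.conjTranspose_apply]
        _ = ∑ j, ∑ r : Fin n × Fin n, C r i j * star (C r k j) := Finset.sum_comm
        _ = ∑ j, P (i, j) (k, j) := Finset.sum_congr rfl fun j _ => hkey (i, j) (k, j)
        _ = σ i k := hPm2 i k
    set e : Fin (n * n) ≃ Fin n × Fin n := finProdFinEquiv.symm with hedef
    set B : Fin (n * n) → Matrix (Fin n) (Fin n) ℂ := fun t => C (e t) * Q⁻¹ with hBdef
    have hBQ : ∀ t, B t * Q = C (e t) := by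
      intro t
      rw [hBdef, Matrix.mul_assoc, hQinv', Matrix.mul_one]
    have hBH : ∀ t, (B t)ᴴ = Q⁻¹ * (C (e t))ᴴ := by
      intro t
      rw [hBdef, Matrix.conjTranspose_mul, hQinvH]
    set Φ : Matrix (Fin n) (Fin n) ℂ →ₗ[ℂ] Matrix (Fin n) (Fin n) ℂ :=
      { toFun := fun X => ∑ t : Fin (n * n), B t * X * (B t)ᴴ
        map_add' := by
          intro X Y
          simp [Matrix.mul_add, Matrix.add_mul, Finset.sum_add_distrib]
        map_smul' := by
          intro c X
          simp [Matrix.mul_smul, Matrix.smul_mul, Finset.smul_sum] } with hΦdef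
    have hΦapp : ∀ X, Φ X = ∑ t : Fin (n * n), B t * X * (B t)ᴴ := fun X => rfl
    refine ⟨Φ, ⟨⟨n * n, B, hΦapp, ?_⟩, ?_⟩, ?_⟩
    · -- trace preserving
      have h : ∀ t, (B t)ᴴ * B t = Q⁻¹ * ((C (e t))ᴴ * C (e t)) * Q⁻¹ := fun t => by
        rw [hBH, hBdef]; simp only [Matrix.mul_assoc]
      simp_rw [h]
      rw [← Finset.sum_mul, ← Finset.mul_sum]
      rw [Equiv.sum_comp e fun r => (C r)ᴴ * C r, hCC, ← hQQ,
        ← Matrix.mul_assoc, hQinv', Matrix.one_mul, hQinv]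
    · -- Φ ρ = σ
      rw [hΦapp]
      have h : ∀ t, B t * ρ * (B t)ᴴ = C (e t) * (C (e t))ᴴ := by
        intro t
        rw [hBH, hBdef, ← hQQ]
        simp only [Matrix.mul_assoc]
        rw [hcancel, hcancel']
      simp_rw [h]
      exact (Equiv.sum_comp e fun r => C r * (C r)ᴴ).trans hCCt
    · -- F Φ = P
      ext p q
      show Φ (Q * Matrix.single p.2 q.2 (1:ℂ) * Q) p.1 q.1 = P p q
      rw [hΦapp, Matrix.sum_apply]
      calc ∑ t : Fin (n * n),
              (B t * (Q * Matrix.single p.2 q.2 (1:ℂ) * Q) * (B t)ᴴ) p.1 q.1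
          = ∑ t : Fin (n * n), C (e t) p.1 p.2 * star (C (e t) q.1 q.2) := by
            refine Finset.sum_congr rfl fun t _ => ?_
            rw [aux_conj Q (B t) hQH p.2 q.2 p.1 q.1, hBQ]
        _ = ∑ r : Fin n × Fin n, C r p.1 p.2 * star (C r q.1 q.2) :=
            Equiv.sum_comp e fun r => C r p.1 p.2 * star (C r q.1 q.2)
        _ = P p q := hkey p q
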